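/- For any Tychonoff space X, if X has the property (κ), then C_p(X) does not have the property (B). -/

import Mathlib

open Filter Topology Set

-- union of closed nwd-ish
lemma my_interior_union_empty {Y : Type*} [TopologicalSpace Y] {s t : Set Y}
    (hs : IsClosed s) (hsi : interior s = ∅) (hti : interior t = ∅) :
    interior (s ∪ t) = ∅ := by
  have h1 : interior (s ∪ t) \ s ⊆ interior t := by
    apply interior_maximal
    · intro x hx
      rcases (interior_subset hx.1) with h | h
      · exact absurd h hx.2
      · exact h
    · exact isOpen_interior.sdiff hs
  rw [hti, Set.subset_empty_iff, Set.diff_eq_empty] at h1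
  have := interior_maximal h1 isOpen_interior
  rwa [hsi, Set.subset_empty_iff] at this

-- bump function
lemma my_bump {X : Type*} [TopologicalSpace X] [T35Space X] (F : Finset X) (Ω : Set X)
    (hΩ : IsOpen Ω) (hF : ∀ x ∈ F, x ∈ Ω) :
    ∃ m : X → ℝ, Continuous m ∧ (∀ y, 0 ≤ m y) ∧ (∀ y, m y ≤ 1) ∧
      (∀ x ∈ F, m x = 1) ∧ (∀ y, y ∉ Ω → m y = 0) := by
  classical
  induction F using Finset.induction with
  | empty =>
      exact ⟨fun _ => 0, continuous_const, fun _ => le_rfl, fun _ => zero_le_one, by simp,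
        fun _ _ => rfl⟩
  | @insert a s ha ih =>
      obtain ⟨m, hmc, hm0, hm1, hmF, hmout⟩ := ih (fun x hx => hF x (Finset.mem_insert_of_mem hx))
      obtain ⟨q, hqc, hqa, hqK⟩ := CompletelyRegularSpace.completely_regular a Ωᶜ
        hΩ.isClosed_compl (by simpa using hF a (Finset.mem_insert_self a s))
      refine ⟨fun y => 1 - (1 - m y) * (q y : ℝ), ?_, ?_, ?_, ?_, ?_⟩
      · exact continuous_const.sub ((continuous_const.sub hmc).mul
          (continuous_subtype_val.comp hqc))
      · intro y
        show (0:ℝ) ≤ 1 - (1 - m y) * (q y : ℝ)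
        have h1 : (1 - m y) * (q y : ℝ) ≤ 1 := by
          have := mul_le_one₀ (by linarith [hm0 y] : (1 : ℝ) - m y ≤ 1) (q y).2.1 (q y).2.2
          linarith
        linarith
      · intro y
        show 1 - (1 - m y) * (q y : ℝ) ≤ 1
        have : 0 ≤ (1 - m y) * (q y : ℝ) := mul_nonneg (by linarith [hm1 y]) (q y).2.1
        linarith
      · intro x hx
        show 1 - (1 - m x) * (q x : ℝ) = 1
        rcases Finset.mem_insert.1 hx with rfl | hx
        · have : (q x : ℝ) = 0 := by rw [hqa]; rfl
          rw [this]; ring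
        · rw [hmF x hx]; ring
      · intro y hy
        show 1 - (1 - m y) * (q y : ℝ) = 0
        have hq1 : (q y : ℝ) = 1 := by rw [hqK hy]; rfl
        rw [hmout y hy, hq1]; ring

lemma my_basic {X : Type*} [TopologicalSpace X] (g : {f : X → ℝ // Continuous f})
    (V : Set {f : X → ℝ // Continuous f}) (hV : IsOpen V) (hg : g ∈ V) :
    ∃ (F : Finset X) (δ : ℝ), 0 < δ ∧
      ∀ h : {f : X → ℝ // Continuous f}, (∀ x ∈ F, |h.1 x - g.1 x| < δ) → h ∈ V := by
  classical
  obtain ⟨U, hU, rfl⟩ := isOpen_induced_iff.1 hV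
  have hU' : U ∈ 𝓝 (g.1) := hU.mem_nhds hg
  rw [nhds_pi] at hU'
  obtain ⟨I, hIfin, t, ht, hsub⟩ := Filter.mem_pi.1 hU'
  choose ε hεpos hball using fun x => Metric.mem_nhds_iff.1 (ht x)
  by_cases hne : hIfin.toFinset.Nonempty
  · refine ⟨hIfin.toFinset, hIfin.toFinset.inf' hne ε, ?_, ?_⟩
    · exact (Finset.lt_inf'_iff hne).2 fun x _ => hεpos x
    · intro h hh
      apply hsub
      intro x hxI
      apply hball x
      have h1 := hh x (hIfin.mem_toFinset.2 hxI)
      rw [Metric.mem_ball, Real.dist_eq]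
      exact lt_of_lt_of_le h1 (Finset.inf'_le ε (hIfin.mem_toFinset.2 hxI))
  · refine ⟨∅, 1, one_pos, fun h _ => ?_⟩
    apply hsub
    intro x hxI
    exact absurd ⟨x, hIfin.mem_toFinset.2 hxI⟩ hne

/-- If `X` has property (κ), then `C_p(X)` does not have property (B). -/
theorem kappa_implies_not_B_of_Cp {X : Type*} [TopologicalSpace X] [T35Space X]
    (hκ : ∀ S : ℕ → Set X, (∀ n, (S n).Finite) → Pairwise (Function.onFun Disjoint S) →
      ∃ φ : ℕ → ℕ, StrictMono φ ∧ ∃ W : ℕ → Set X,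
        (∀ k, IsOpen (W k) ∧ S (φ k) ⊆ W k) ∧ ∀ x : X, {k | x ∈ W k}.Finite) :
    ¬ ∃ A : ℕ → Set {f : X → ℝ // Continuous f},
      (∀ n, IsClosed (A n) ∧ IsNowhereDense (A n)) ∧
      ∀ K : Set {f : X → ℝ // Continuous f}, IsCompact K → ∃ n, K ⊆ A n := by
  classical
  rintro ⟨A, hA, habs⟩
  have hAint : ∀ n, interior (A n) = ∅ := by
    intro n
    have h2 : interior (closure (A n)) = ∅ := (hA n).2
    rwa [(hA n).1.closure_eq] at h2
  -- increasing hulls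
  obtain ⟨D, hDmem⟩ : ∃ D : ℕ → Set {f : X → ℝ // Continuous f},
      ∀ n x, x ∈ D n ↔ ∃ i ≤ n, x ∈ A i :=
    ⟨fun n => ⋃ i ∈ Finset.range (n+1), A i, by
      intro n x; simp [Finset.mem_range, Nat.lt_succ_iff]⟩
  have hAD : ∀ n, A n ⊆ D n := fun n x hx => (hDmem n x).2 ⟨n, le_rfl, hx⟩
  have hDmono : ∀ i j, i ≤ j → D i ⊆ D j := by
    intro i j hij x hx
    obtain ⟨k, hk, hxk⟩ := (hDmem i x).1 hx
    exact (hDmem j x).2 ⟨k, hk.trans hij, hxk⟩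
  have hDeq : ∀ n, D n = ⋃ i ∈ Finset.range (n+1), A i := by
    intro n; ext x; simp [hDmem, Finset.mem_range, Nat.lt_succ_iff]
  have hDc : ∀ n, IsClosed (D n) := by
    intro n; rw [hDeq n]
    exact Set.Finite.isClosed_biUnion (Finset.range (n+1)).finite_toSet
      (fun i _ => (hA i).1)
  have hDint : ∀ n, interior (D n) = ∅ := by
    intro n
    induction n with
    | zero =>
        have : D 0 = A 0 := by
          ext x; rw [hDmem]; constructor
          · rintro ⟨i, hi, hx⟩
            have hi0 : i = 0 := Nat.le_zero.1 hi
            exact hi0 ▸ hx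
          · exact fun hx => ⟨0, le_rfl, hx⟩
        rw [this]; exact hAint 0
    | succ n ih =>
        have hsp : D (n+1) = A (n+1) ∪ D n := by
          ext x
          rw [hDmem, Set.mem_union, hDmem]
          constructor
          · rintro ⟨i, hi, hx⟩
            rcases Nat.lt_or_ge i (n+1) with h | h
            · exact Or.inr ⟨i, by omega, hx⟩
            · have : i = n+1 := by omega
              exact Or.inl (this ▸ hx)
          · rintro (hx | ⟨i, hi, hx⟩)
            · exact ⟨n+1, le_rfl, hx⟩
            · exact ⟨i, by omega, hx⟩
        rw [hsp]
        exact my_interior_union_empty (hA (n+1)).1 (hAint (n+1)) ih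
  -- existence of almost-zero outside points with box certificates
  have EX : ∀ (n : ℕ) (T : Finset X), ∃ (g : {f : X → ℝ // Continuous f})
      (F : Finset X) (δ : ℝ), 0 < δ ∧ (∀ x ∈ T, |g.1 x| < 1/((n:ℝ)+1)) ∧
      ∀ h : {f : X → ℝ // Continuous f}, (∀ x ∈ F, |h.1 x - g.1 x| < δ) → h ∉ D n := by
    intro n T
    set O : Set {f : X → ℝ // Continuous f} :=
      {h | ∀ x ∈ T, |h.1 x| < 1/((n:ℝ)+1)} with hO
    have hOopen : IsOpen O := by
      have : O = ⋂ x ∈ T, {h : {f : X → ℝ // Continuous f} | |h.1 x| < 1/((n:ℝ)+1)} := by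
        ext h; simp [hO]
      rw [this]
      refine isOpen_biInter_finset fun x _ => ?_
      exact isOpen_lt (continuous_abs.comp ((continuous_apply x).comp
        continuous_subtype_val)) continuous_const
    have h0 : (⟨fun _ => 0, continuous_const⟩ : {f : X → ℝ // Continuous f}) ∈ O := by
      intro x _
      simp only [abs_zero]
      positivity
    have hdense : Dense (D n)ᶜ := interior_eq_empty_iff_dense_compl.1 (hDint n)
    obtain ⟨g, hgO, hgc⟩ := hdense.inter_open_nonempty O hOopen ⟨_, h0⟩
    have hVopen : IsOpen (O ∩ (D n)ᶜ) := hOopen.inter (hDc n).isOpen_compl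
    obtain ⟨F₀, δ, hδ, hF₀⟩ := my_basic g _ hVopen ⟨hgO, hgc⟩
    exact ⟨g, F₀, δ, hδ, fun x hx => hgO x hx, fun h hh => (hF₀ h hh).2⟩
  choose gg FF dd hdpos hsmall hcert using EX
  -- the recursion accumulating coordinates
  obtain ⟨TT, hT0, hTs⟩ : ∃ TT : ℕ → Finset X, TT 0 = ∅ ∧
      ∀ n, TT (n+1) = TT n ∪ FF n (TT n) :=
    ⟨fun n => Nat.rec ∅ (fun k Tk => Tk ∪ FF k Tk) n, rfl, fun _ => rfl⟩
  have hTmono : ∀ i j, i ≤ j → TT i ⊆ TT j := by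
    intro i j hij
    induction j, hij using Nat.le_induction with
    | base => exact subset_rfl
    | succ n hn ih =>
        refine ih.trans ?_
        rw [hTs]
        exact Finset.subset_union_left
  have hFT : ∀ i j, i < j → FF i (TT i) ⊆ TT j := by
    intro i j hij
    refine Finset.Subset.trans ?_ (hTmono (i+1) j hij)
    rw [hTs]
    exact Finset.subset_union_right
  set S : ℕ → Set X := fun n => (↑(FF n (TT n)) : Set X) \ (↑(TT n) : Set X) with hSdef
  have hSfin : ∀ n, (S n).Finite :=
    fun n => Set.Finite.subset (FF n (TT n)).finite_toSet diff_subset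
  have hSdisj : Pairwise (Function.onFun Disjoint S) := by
    have key : ∀ a b, a < b → Disjoint (S a) (S b) := by
      intro a b hab
      rw [Set.disjoint_left]
      rintro x ⟨hxF, _⟩ ⟨_, hxT⟩
      exact hxT (Finset.mem_coe.2 (hFT a b hab (Finset.mem_coe.1 hxF)))
    intro i j hij
    rcases hij.lt_or_gt with h | h
    · exact key i j h
    · exact (key j i h).symm
  obtain ⟨φ, hφ, W, hW, hpf⟩ := hκ S hSfin hSdisj
  -- bumps
  have hb : ∀ k, ∃ m : X → ℝ, Continuous m ∧ (∀ y, 0 ≤ m y) ∧ (∀ y, m y ≤ 1) ∧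
      (∀ x ∈ FF (φ k) (TT (φ k)), m x = 1) ∧
      (∀ y, y ∉ (W k ∪ {z | |(gg (φ k) (TT (φ k))).1 z| < 1/((φ k : ℝ)+1)}) → m y = 0) := by
    intro k
    apply my_bump
    · exact (hW k).1.union (isOpen_lt (continuous_abs.comp
        (gg (φ k) (TT (φ k))).2) continuous_const)
    · intro x hx
      by_cases hxT : x ∈ TT (φ k)
      · exact Or.inr (hsmall (φ k) (TT (φ k)) x hxT)
      · refine Or.inl ((hW k).2 ?_)
        exact ⟨Finset.mem_coe.2 hx, by simpa using hxT⟩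
  choose m hmc hm0 hm1 hmF hmout using hb
  set fseq : ℕ → {f : X → ℝ // Continuous f} := fun k =>
    ⟨fun y => (gg (φ k) (TT (φ k))).1 y * m k y,
      (gg (φ k) (TT (φ k))).2.mul (hmc k)⟩ with hfseq
  have hnotD : ∀ k, fseq k ∉ D (φ k) := by
    intro k
    apply hcert (φ k) (TT (φ k))
    intro x hx
    show |(gg (φ k) (TT (φ k))).1 x * m k x - (gg (φ k) (TT (φ k))).1 x| <
      dd (φ k) (TT (φ k))
    rw [hmF k x hx, mul_one, sub_self, abs_zero]
    exact hdpos _ _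
  have htend : Tendsto fseq atTop
      (𝓝 (⟨fun _ => 0, continuous_const⟩ : {f : X → ℝ // Continuous f})) := by
    rw [tendsto_subtype_rng]
    rw [tendsto_pi_nhds]
    intro x
    show Tendsto (fun k => (gg (φ k) (TT (φ k))).1 x * m k x) atTop (𝓝 0)
    obtain ⟨N, hN⟩ : ∃ N : ℕ, ∀ k, N ≤ k → x ∉ W k := by
      obtain ⟨b, hb2⟩ := (hpf x).bddAbove
      exact ⟨b+1, fun k hk hxk => by
        have := hb2 hxk
        omega⟩
    rw [tendsto_zero_iff_abs_tendsto_zero]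
    apply squeeze_zero' (Eventually.of_forall fun k => abs_nonneg _) ?_
      tendsto_one_div_add_atTop_nhds_zero_nat
    refine eventually_atTop.2 ⟨N, fun k hk => ?_⟩
    by_cases hxv : |(gg (φ k) (TT (φ k))).1 x| < 1/((φ k : ℝ)+1)
    · have hmabs : |m k x| ≤ 1 := abs_le.2 ⟨by linarith [hm0 k x], hm1 k x⟩
      have h1 : |(gg (φ k) (TT (φ k))).1 x * m k x| ≤ |(gg (φ k) (TT (φ k))).1 x| := by
        rw [abs_mul]
        exact mul_le_of_le_one_right (abs_nonneg _) hmabs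
      have h2 : 1/((φ k : ℝ)+1) ≤ 1/((k : ℝ)+1) := by
        apply one_div_le_one_div_of_le
        · positivity
        · have := hφ.le_apply (x := k)
          exact_mod_cast add_le_add_left (Nat.cast_le.2 this) 1
      linarith
    · have hout : m k x = 0 := by
        apply hmout k x
        rintro (h | h)
        · exact hN k hk h
        · exact hxv h
      rw [hout, mul_zero, abs_zero]
      positivity
  have hK : IsCompact (insert (⟨fun _ => 0, continuous_const⟩ :
      {f : X → ℝ // Continuous f}) (Set.range fseq)) := htend.isCompact_insert_range
  obtain ⟨n₀, hn₀⟩ := habs _ hK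
  apply hnotD n₀
  have h1 : fseq n₀ ∈ A n₀ := hn₀ (Set.mem_insert_of_mem _ (Set.mem_range_self n₀))
  exact hDmono n₀ (φ n₀) hφ.le_apply (hAD n₀ h1)
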